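/- Let Δ ≥ 1 and n_M be natural numbers, let l = n_M div Δ and Q = n_M mod Δ, and suppose l is even. Then for every integer x with 0 ≤ x ≤ n_M: ρ(x) = n_M − 2x if 0 ≤ x ≤ lΔ/2; ρ(x) = Q + lΔ/2 − x if lΔ/2 ≤ x ≤ lΔ/2 + Q; and ρ(x) = 0 if lΔ/2 + Q ≤ x ≤ n_M. -/

import Mathlib

/-- Down-shift operator `S^Δ` on matrices over `F₂`: shifts rows down by `Δ`,
filling the top `Δ` rows with zeros. -/
def shiftS (Δ : ℕ) {r c : ℕ} (X : Matrix (Fin r) (Fin c) (ZMod 2)) :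
    Matrix (Fin r) (Fin c) (ZMod 2) :=
  fun i j => if _h : Δ ≤ (i : ℕ) then
      X ⟨(i : ℕ) - Δ, lt_of_le_of_lt (Nat.sub_le _ _) i.isLt⟩ j
    else 0

/-- The function `φ(p,q)`: with `l = p div q` (convention `p div 0 = 0`),
`φ(p,q) = q + l·q/2` for `l` even, `φ(p,q) = p − (l−1)·q/2` for `l` odd. -/
def phi (p q : ℕ) : ℕ :=
  if Even (p / q) then q + (p / q / 2) * q else p - ((p / q - 1) / 2) * q

/-- Probability that the random variable `f` takes the value `a`, for the
discrete probability mass function `p`. -/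
noncomputable def prEq {Ω α : Type*} [Fintype Ω] [DecidableEq α]
    (p : Ω → ℝ) (f : Ω → α) (a : α) : ℝ :=
  ∑ ω ∈ Finset.univ.filter (fun ω => f ω = a), p ω

/-- Shannon entropy (base 2) of the random variable `f` under the pmf `p`. -/
noncomputable def entropy2 {Ω α : Type*} [Fintype Ω] [Fintype α] [DecidableEq α]
    (p : Ω → ℝ) (f : Ω → α) : ℝ :=
  -∑ a : α, prEq p f a * Real.logb 2 (prEq p f a)

/-- Independence of two random variables under the pmf `p`. -/
def IndepRV {Ω α β : Type*} [Fintype Ω] [DecidableEq α] [DecidableEq β]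
    (p : Ω → ℝ) (f : Ω → α) (g : Ω → β) : Prop :=
  ∀ a b, prEq p (fun ω => (f ω, g ω)) (a, b) = prEq p f a * prEq p g b

/-- Mutual independence of three random variables under the pmf `p`. -/
def MutIndep3 {Ω α β γ : Type*} [Fintype Ω] [DecidableEq α] [DecidableEq β]
    [DecidableEq γ] (p : Ω → ℝ) (f : Ω → α) (g : Ω → β) (h : Ω → γ) : Prop :=
  ∀ a b c, prEq p (fun ω => (f ω, g ω, h ω)) (a, b, c)
      = prEq p f a * prEq p g b * prEq p h c

/-- Mutual information (base 2) `I(f; g) = H(f) + H(g) − H(f, g)`. -/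
noncomputable def mutInfo2 {Ω α β : Type*} [Fintype Ω] [Fintype α] [Fintype β]
    [DecidableEq α] [DecidableEq β] (p : Ω → ℝ) (f : Ω → α) (g : Ω → β) : ℝ :=
  entropy2 p f + entropy2 p g - entropy2 p (fun ω => (f ω, g ω))

/-- Number of ones in a vector over `F₂`. -/
def wt {n : ℕ} (a : Fin n → ZMod 2) : ℕ :=
  (Finset.univ.filter (fun i => a i = 1)).card

/-- `γ1(a)`: complement of `a` stacked over the all-ones vector of length `Δ`. -/
def gamma1 (Δ : ℕ) {nM : ℕ} (a : Fin nM → ZMod 2) : Fin (nM + Δ) → ZMod 2 :=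
  fun i => if h : (i : ℕ) < nM then 1 - a ⟨(i : ℕ), h⟩ else 1

/-- `γ2(a)`: the zero vector of length `Δ` stacked over the complement of `a`. -/
def gamma2 (Δ : ℕ) {nM : ℕ} (a : Fin nM → ZMod 2) : Fin (nM + Δ) → ZMod 2 :=
  fun i => if _h : Δ ≤ (i : ℕ) then
      1 - a ⟨(i : ℕ) - Δ, by have := i.isLt; omega⟩
    else 0

/-- The overlap `γ1(a)^T γ2(a)`: number of positions where both are one. -/
def overlap (Δ : ℕ) {nM : ℕ} (a : Fin nM → ZMod 2) : ℕ :=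
  (Finset.univ.filter (fun i => gamma1 Δ a i = 1 ∧ gamma2 Δ a i = 1)).card

/-- `ρ(x)`: minimal overlap over all vectors `a ∈ F₂^{n_M}` with `|a| = x`. -/
noncomputable def rho (Δ nM x : ℕ) : ℕ :=
  sInf (overlap Δ '' {a : Fin nM → ZMod 2 | wt a = x})

namespace RhoAux

/-- overlap in ℕ-land, as a function of the set of ones. -/
def ovN (Δ nM : ℕ) (A : Finset ℕ) : ℕ :=
  ((Finset.Ico Δ (nM + Δ)).filter (fun i => (i - Δ) ∉ A ∧ (i < nM → i ∉ A))).card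

def onesOf {nM : ℕ} (a : Fin nM → ZMod 2) : Finset ℕ :=
  (Finset.univ.filter (fun i => a i = 1)).image Fin.val

lemma mem_onesOf {nM : ℕ} (a : Fin nM → ZMod 2) (p : ℕ) :
    p ∈ onesOf a ↔ ∃ h : p < nM, a ⟨p, h⟩ = 1 := by
  simp only [onesOf, Finset.mem_image, Finset.mem_filter, Finset.mem_univ, true_and]
  constructor
  · rintro ⟨i, hi, rfl⟩; exact ⟨i.isLt, by simpa using hi⟩
  · rintro ⟨h, ha⟩; exact ⟨⟨p, h⟩, ha, rfl⟩

lemma onesOf_subset {nM : ℕ} (a : Fin nM → ZMod 2) : onesOf a ⊆ Finset.range nM := by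
  intro p hp
  rw [mem_onesOf] at hp
  exact Finset.mem_range.mpr hp.1

lemma wt_eq {nM : ℕ} (a : Fin nM → ZMod 2) : wt a = (onesOf a).card :=
  (Finset.card_image_of_injective _ Fin.val_injective).symm

lemma zmod2_sub (z : ZMod 2) : 1 - z = 1 ↔ z = 0 := by revert z; decide

lemma zmod2_ne (z : ZMod 2) : z = 0 ↔ ¬ z = 1 := by revert z; decide

lemma overlap_eq {Δ nM : ℕ} (a : Fin nM → ZMod 2) :
    overlap Δ a = ovN Δ nM (onesOf a) := by
  unfold overlap ovN
  refine Finset.card_bij' (i := fun (i : Fin (nM + Δ)) _ => (i : ℕ))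
    (j := fun i hi => (⟨i, by simp only [Finset.mem_filter, Finset.mem_Ico] at hi; omega⟩ :
      Fin (nM + Δ))) ?_ ?_ (fun a ha => rfl) (fun a ha => rfl)
  · intro i hi
    simp only [Finset.mem_filter, Finset.mem_univ, true_and] at hi
    obtain ⟨h1, h2⟩ := hi
    unfold gamma1 at h1
    unfold gamma2 at h2
    simp only [Finset.mem_filter, Finset.mem_Ico]
    split_ifs at h2 with hge
    · rw [zmod2_sub] at h2
      refine ⟨⟨hge, i.isLt⟩, ?_, ?_⟩
      · rw [mem_onesOf]
        rintro ⟨hlt, hone⟩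
        rw [h2] at hone; exact one_ne_zero hone.symm
      · intro hlt
        rw [mem_onesOf]
        rintro ⟨hlt', hone⟩
        rw [dif_pos hlt, zmod2_sub] at h1
        rw [h1] at hone; exact one_ne_zero hone.symm
    · exact absurd h2.symm one_ne_zero
  · intro i hi
    simp only [Finset.mem_filter, Finset.mem_Ico] at hi
    obtain ⟨⟨hge, hlt⟩, hA1, hA2⟩ := hi
    simp only [Finset.mem_filter, Finset.mem_univ, true_and]
    constructor
    · unfold gamma1
      split_ifs with h
      · rw [zmod2_sub, zmod2_ne]
        intro hone
        exact hA2 h ((mem_onesOf a _).mpr ⟨h, hone⟩)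
      · rfl
    · unfold gamma2
      rw [dif_pos hge, zmod2_sub, zmod2_ne]
      intro hone
      exact hA1 ((mem_onesOf a _).mpr ⟨by omega, hone⟩)

def vecOf {nM : ℕ} (A : Finset ℕ) : Fin nM → ZMod 2 := fun i => if (i : ℕ) ∈ A then 1 else 0

lemma onesOf_vecOf {nM : ℕ} {A : Finset ℕ} (hA : A ⊆ Finset.range nM) :
    onesOf (vecOf A : Fin nM → ZMod 2) = A := by
  ext p
  rw [mem_onesOf]
  constructor
  · rintro ⟨h, hone⟩
    unfold vecOf at hone
    by_cases hp : p ∈ A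
    · exact hp
    · rw [if_neg hp] at hone; exact absurd hone.symm one_ne_zero
  · intro hp
    exact ⟨Finset.mem_range.mp (hA hp), by unfold vecOf; rw [if_pos hp]⟩



lemma dm_div {Δ : ℕ} (hΔ : 0 < Δ) {s r : ℕ} (hr : r < Δ) : (s * Δ + r) / Δ = s := by
  rw [add_comm, Nat.add_mul_div_right _ _ hΔ, Nat.div_eq_of_lt hr, zero_add]

lemma dm_mod {Δ : ℕ} (_hΔ : 0 < Δ) {s r : ℕ} (hr : r < Δ) : (s * Δ + r) % Δ = r := by
  rw [add_comm, Nat.add_mul_mod_self_right, Nat.mod_eq_of_lt hr]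

lemma decomp {Δ : ℕ} (hΔ : 0 < Δ) (p : ℕ) : ∃ s r, r < Δ ∧ p = s * Δ + r :=
  ⟨p / Δ, p % Δ, Nat.mod_lt _ hΔ, by rw [mul_comm]; exact (Nat.div_add_mod p Δ).symm⟩

/-- cardinality of the set of "interior slots" -/
lemma card_S1 {Δ nM t : ℕ} (hΔ : 0 < Δ) (ht : nM / Δ = 2 * t) :
    ((Finset.Ico Δ nM).filter (fun p => (Even (p / Δ) ↔ p % Δ < nM % Δ))).card = t * Δ := by
  have hQ : nM % Δ < Δ := Nat.mod_lt _ hΔ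
  have hnM : Δ * (2 * t) + nM % Δ = nM := by
    have := Nat.div_add_mod nM Δ; rw [ht] at this; exact this
  have hbr : Δ * (2 * t) = 2 * t * Δ := by ring
  rw [← Finset.card_range (t * Δ)]
  refine Finset.card_bij' (i := fun p _ => ((p / Δ - 1) / 2) * Δ + p % Δ)
    (j := fun j _ => (if j % Δ < nM % Δ then 2 * (j / Δ) + 2 else 2 * (j / Δ) + 1) * Δ + j % Δ)
    ?_ ?_ ?_ ?_
  · -- maps into range (t*Δ)
    intro p hp
    obtain ⟨s, r, hr, rfl⟩ := decomp hΔ p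
    simp only [Finset.mem_filter, Finset.mem_Ico, dm_div hΔ hr, dm_mod hΔ hr,
      Nat.even_iff] at hp
    obtain ⟨⟨hge, hlt⟩, hpar⟩ := hp
    simp only [Finset.mem_range, dm_div hΔ hr, dm_mod hΔ hr]
    have hs1 : 1 ≤ s := by
      by_contra h
      have h0 : s = 0 := by omega
      subst h0
      simp only [zero_mul, zero_add] at hge
      omega
    have hsle : s ≤ 2 * t := by
      by_contra h
      have h1 : (2 * t + 1) * Δ ≤ s * Δ := Nat.mul_le_mul_right _ (by omega)
      have h2 : (2 * t + 1) * Δ = 2 * t * Δ + Δ := by ring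
      omega
    have key : (s - 1) / 2 + 1 ≤ t := by omega
    calc (s - 1) / 2 * Δ + r < ((s - 1) / 2 + 1) * Δ := by
          have : ((s - 1) / 2 + 1) * Δ = (s - 1) / 2 * Δ + Δ := by ring
          omega
      _ ≤ t * Δ := Nat.mul_le_mul_right _ key
  · -- maps back into S1
    intro j hj
    rw [Finset.mem_range] at hj
    obtain ⟨q, r, hr, rfl⟩ := decomp hΔ j
    have hqt : q < t := by
      by_contra h
      have h1 : t * Δ ≤ q * Δ := Nat.mul_le_mul_right _ (by omega)
      omega
    simp only [dm_div hΔ hr, dm_mod hΔ hr, Finset.mem_filter, Finset.mem_Ico]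
    split_ifs with hrQ
    · have h1 : (2 * q + 2) * Δ ≤ 2 * t * Δ := Nat.mul_le_mul_right _ (by omega)
      have h2 : 1 * Δ ≤ (2 * q + 2) * Δ := Nat.mul_le_mul_right _ (by omega)
      refine ⟨⟨by omega, by omega⟩, ?_⟩
      rw [Nat.even_iff]
      omega
    · have h1 : (2 * q + 2) * Δ ≤ 2 * t * Δ := Nat.mul_le_mul_right _ (by omega)
      have h2 : 1 * Δ ≤ (2 * q + 1) * Δ := Nat.mul_le_mul_right _ (by omega)
      have h3 : (2 * q + 2) * Δ = (2 * q + 1) * Δ + Δ := by ring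
      refine ⟨⟨by omega, by omega⟩, ?_⟩
      rw [Nat.even_iff]
      omega
  · -- left inverse
    intro p hp
    obtain ⟨s, r, hr, rfl⟩ := decomp hΔ p
    simp only [Finset.mem_filter, Finset.mem_Ico, dm_div hΔ hr, dm_mod hΔ hr,
      Nat.even_iff] at hp
    obtain ⟨⟨hge, hlt⟩, hpar⟩ := hp
    have hs1 : 1 ≤ s := by
      by_contra h
      have h0 : s = 0 := by omega
      subst h0
      simp only [zero_mul, zero_add] at hge
      omega
    simp only [dm_div hΔ hr, dm_mod hΔ hr]
    split_ifs with hrQ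
    · have : 2 * ((s - 1) / 2) + 2 = s := by omega
      rw [this]
    · have : 2 * ((s - 1) / 2) + 1 = s := by omega
      rw [this]
  · -- right inverse
    intro j hj
    rw [Finset.mem_range] at hj
    obtain ⟨q, r, hr, rfl⟩ := decomp hΔ j
    simp only [dm_div hΔ hr, dm_mod hΔ hr]
    split_ifs with hrQ
    · have : (2 * q + 2 - 1) / 2 = q := by omega
      rw [this]
    · have : (2 * q + 1 - 1) / 2 = q := by omega
      rw [this]

lemma card_P {Δ nM t : ℕ} (hΔ : 0 < Δ) (ht : nM / Δ = 2 * t) :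
    ((Finset.Ico Δ (nM + Δ)).filter
      (fun i => ¬(Even (i / Δ) ↔ i % Δ < nM % Δ))).card = t * Δ + nM % Δ := by
  have hQ : nM % Δ < Δ := Nat.mod_lt _ hΔ
  have hnM : Δ * (2 * t) + nM % Δ = nM := by
    have := Nat.div_add_mod nM Δ; rw [ht] at this; exact this
  have hbr : Δ * (2 * t) = 2 * (t * Δ) := by ring
  have hbr2 : (2 * t) * Δ = 2 * (t * Δ) := by ring
  have h1 := Finset.card_filter_add_card_filter_not
    (s := Finset.Ico Δ (nM + Δ)) (p := fun i => (Even (i / Δ) ↔ i % Δ < nM % Δ))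
  have h2 : (Finset.Ico Δ (nM + Δ)).filter (fun i => (Even (i / Δ) ↔ i % Δ < nM % Δ))
      = (Finset.Ico Δ nM).filter (fun p => (Even (p / Δ) ↔ p % Δ < nM % Δ)) := by
    ext i
    simp only [Finset.mem_filter, Finset.mem_Ico]
    constructor
    · rintro ⟨⟨hge, hlt⟩, hc⟩
      refine ⟨⟨hge, ?_⟩, hc⟩
      by_contra h
      push_neg at h
      obtain ⟨e, rfl⟩ : ∃ e, i = nM + e := ⟨i - nM, by omega⟩
      have he : e < Δ := by omega
      by_cases he2 : nM % Δ + e < Δ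
      · have hi : nM + e = (2 * t) * Δ + (nM % Δ + e) := by omega
        rw [hi, dm_div hΔ he2, dm_mod hΔ he2, Nat.even_iff] at hc
        omega
      · have hrlt : nM % Δ + e - Δ < Δ := by omega
        have hi : nM + e = (2 * t + 1) * Δ + (nM % Δ + e - Δ) := by
          have : (2 * t + 1) * Δ = 2 * (t * Δ) + Δ := by ring
          omega
        rw [hi, dm_div hΔ hrlt, dm_mod hΔ hrlt, Nat.even_iff] at hc
        omega
    · rintro ⟨⟨hge, hlt⟩, hc⟩
      exact ⟨⟨hge, by omega⟩, hc⟩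
  rw [h2, card_S1 hΔ ht, Nat.card_Ico] at h1
  omega




lemma LB1 {Δ nM : ℕ} {A : Finset ℕ} (hA : A ⊆ Finset.range nM) :
    nM ≤ ovN Δ nM A + 2 * A.card := by
  classical
  have h1 := Finset.card_filter_add_card_filter_not
    (s := Finset.Ico Δ (nM + Δ)) (p := fun i => (i - Δ) ∉ A ∧ (i < nM → i ∉ A))
  have h2 : (Finset.Ico Δ (nM + Δ)).filter
      (fun i => ¬((i - Δ) ∉ A ∧ (i < nM → i ∉ A))) ⊆ A.image (· + Δ) ∪ A := by
    intro i hi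
    rw [Finset.mem_filter, Finset.mem_Ico] at hi
    obtain ⟨⟨hge, hlt⟩, hbad⟩ := hi
    rw [Finset.mem_union, Finset.mem_image]
    by_cases hm : (i - Δ) ∈ A
    · exact Or.inl ⟨i - Δ, hm, by omega⟩
    · have : i ∈ A := by tauto
      exact Or.inr this
  have h3 := Finset.card_le_card h2
  have h4 := Finset.card_union_le (A.image (· + Δ)) A
  have h5 := Finset.card_image_le (s := A) (f := (· + Δ))
  rw [Nat.card_Ico] at h1
  unfold ovN
  omega

lemma LB2 {Δ nM t : ℕ} (hΔ : 0 < Δ) (ht : nM / Δ = 2 * t) {A : Finset ℕ}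
    (hA : A ⊆ Finset.range nM) :
    t * Δ + nM % Δ ≤ ovN Δ nM A + A.card := by
  classical
  set P := (Finset.Ico Δ (nM + Δ)).filter
    (fun i => ¬(Even (i / Δ) ↔ i % Δ < nM % Δ)) with hPdef
  have hP : P.card = t * Δ + nM % Δ := card_P hΔ ht
  have hsplit := Finset.card_filter_add_card_filter_not
    (s := P) (p := fun i => (i - Δ) ∉ A ∧ (i < nM → i ∉ A))
  have h1 : (P.filter (fun i => (i - Δ) ∉ A ∧ (i < nM → i ∉ A))).card ≤ ovN Δ nM A := by
    apply Finset.card_le_card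
    intro i hi
    simp only [hPdef, Finset.mem_filter] at hi
    exact Finset.mem_filter.mpr ⟨hi.1.1, hi.2⟩
  have h2 : (P.filter (fun i => ¬((i - Δ) ∉ A ∧ (i < nM → i ∉ A)))).card ≤ A.card := by
    apply Finset.card_le_card_of_injOn (fun i => if i - Δ ∈ A then i - Δ else i)
    · intro i hi
      simp only [hPdef, Finset.mem_coe, Finset.mem_filter, Finset.mem_Ico] at hi
      obtain ⟨⟨⟨hge, hlt⟩, _⟩, hbad⟩ := hi
      show (if i - Δ ∈ A then i - Δ else i) ∈ A
      split_ifs with hm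
      · exact hm
      · have : i ∈ A := by tauto
        exact this
    · intro i₁ hi₁ i₂ hi₂ heq
      simp only [hPdef, Finset.coe_filter, Set.mem_setOf_eq, Finset.mem_filter,
        Finset.mem_Ico] at hi₁ hi₂
      obtain ⟨⟨⟨hge₁, hlt₁⟩, hc₁⟩, _⟩ := hi₁
      obtain ⟨⟨⟨hge₂, hlt₂⟩, hc₂⟩, _⟩ := hi₂
      change (if i₁ - Δ ∈ A then i₁ - Δ else i₁) = (if i₂ - Δ ∈ A then i₂ - Δ else i₂) at heq
      split_ifs at heq with hm₁ hm₂ hm₂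
      · omega
      · exfalso
        have hi12 : i₁ = i₂ + Δ := by omega
        rw [hi12, Nat.add_div_right _ hΔ, Nat.add_mod_right, Nat.even_iff] at hc₁
        rw [Nat.even_iff] at hc₂
        omega
      · exfalso
        have hi21 : i₂ = i₁ + Δ := by omega
        rw [hi21, Nat.add_div_right _ hΔ, Nat.add_mod_right, Nat.even_iff] at hc₂
        rw [Nat.even_iff] at hc₁
        omega
      · exact heq
  omega

lemma ov_slots {Δ nM : ℕ} (hΔ : 0 < Δ) {A : Finset ℕ} (hA : A ⊆ Finset.range nM)
    (hslot : ∀ p ∈ A, (Even (p / Δ) ↔ p % Δ < nM % Δ)) :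
    ovN Δ nM A + (A.card + (A.filter (fun p => Δ ≤ p)).card) = nM := by
  classical
  have h1 := Finset.card_filter_add_card_filter_not
    (s := Finset.Ico Δ (nM + Δ)) (p := fun i => (i - Δ) ∉ A ∧ (i < nM → i ∉ A))
  have hbad : (Finset.Ico Δ (nM + Δ)).filter
      (fun i => ¬((i - Δ) ∉ A ∧ (i < nM → i ∉ A)))
      = A.image (· + Δ) ∪ A.filter (fun p => Δ ≤ p) := by
    ext i
    constructor
    · intro hi
      rw [Finset.mem_filter, Finset.mem_Ico] at hi
      obtain ⟨⟨hge, hlt⟩, hbad⟩ := hi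
      rw [Finset.mem_union, Finset.mem_image]
      by_cases hm : (i - Δ) ∈ A
      · exact Or.inl ⟨i - Δ, hm, by omega⟩
      · have : i ∈ A := by tauto
        exact Or.inr (Finset.mem_filter.mpr ⟨this, hge⟩)
    · intro hi
      rw [Finset.mem_union, Finset.mem_image] at hi
      rw [Finset.mem_filter, Finset.mem_Ico]
      rcases hi with ⟨p, hp, rfl⟩ | hif
      · have hplt : p < nM := Finset.mem_range.mp (hA hp)
        have hpA : p + Δ - Δ ∈ A := by simpa using hp
        exact ⟨⟨by omega, by omega⟩, by tauto⟩
      · rw [Finset.mem_filter] at hif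
        obtain ⟨hiA, hge⟩ := hif
        have hilt : i < nM := Finset.mem_range.mp (hA hiA)
        exact ⟨⟨hge, by omega⟩, by tauto⟩
  have hdisj : Disjoint (A.image (· + Δ)) (A.filter (fun p => Δ ≤ p)) := by
    rw [Finset.disjoint_left]
    rintro i hi1 hi2
    rw [Finset.mem_image] at hi1
    obtain ⟨p, hp, rfl⟩ := hi1
    rw [Finset.mem_filter] at hi2
    obtain ⟨hpA, _⟩ := hi2
    have hs1 := hslot p hp
    have hs2 := hslot _ hpA
    rw [Nat.add_div_right _ hΔ, Nat.add_mod_right, Nat.even_iff] at hs2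
    rw [Nat.even_iff] at hs1
    omega
  have hcard : (A.image (· + Δ) ∪ A.filter (fun p => Δ ≤ p)).card
      = A.card + (A.filter (fun p => Δ ≤ p)).card := by
    rw [Finset.card_union_of_disjoint hdisj,
      Finset.card_image_of_injective _ (add_left_injective Δ)]
  rw [hbad, hcard, Nat.card_Ico] at h1
  unfold ovN
  omega


lemma rho_eq {Δ nM x v : ℕ} (hlow : ∀ a : Fin nM → ZMod 2, wt a = x → v ≤ overlap Δ a)
    (hex : ∃ a : Fin nM → ZMod 2, wt a = x ∧ overlap Δ a = v) : rho Δ nM x = v := by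
  obtain ⟨a, ha, hov⟩ := hex
  apply le_antisymm
  · rw [← hov]
    exact Nat.sInf_le ⟨a, ha, rfl⟩
  · refine le_csInf ⟨overlap Δ a, a, ha, rfl⟩ ?_
    rintro y ⟨b, hb, rfl⟩
    exact hlow b hb

lemma ovN_mono {Δ nM : ℕ} {A B : Finset ℕ} (hAB : A ⊆ B) :
    ovN Δ nM B ≤ ovN Δ nM A := by
  apply Finset.card_le_card
  intro i hi
  rw [Finset.mem_filter] at hi ⊢
  exact ⟨hi.1, fun h => hi.2.1 (hAB h), fun hlt h => hi.2.2 hlt (hAB h)⟩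


end RhoAux

open RhoAux in
/-- Closed form of `ρ` when `l = n_M div Δ` is even (with `Q = n_M mod Δ`):
`ρ(x) = n_M − 2x` for `0 ≤ x ≤ lΔ/2`, `ρ(x) = Q + lΔ/2 − x` for
`lΔ/2 ≤ x ≤ lΔ/2 + Q`, and `ρ(x) = 0` for `lΔ/2 + Q ≤ x ≤ n_M`. -/
theorem rho_closed_form_even (Δ nM : ℕ) (hΔ : 1 ≤ Δ) (hEven : Even (nM / Δ)) :
    ∀ x : ℕ, x ≤ nM →
      (x ≤ (nM / Δ) * Δ / 2 → rho Δ nM x = nM - 2 * x) ∧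
      ((nM / Δ) * Δ / 2 ≤ x → x ≤ (nM / Δ) * Δ / 2 + nM % Δ →
        rho Δ nM x = nM % Δ + (nM / Δ) * Δ / 2 - x) ∧
      ((nM / Δ) * Δ / 2 + nM % Δ ≤ x → rho Δ nM x = 0) := by
  classical
  intro x hx
  obtain ⟨t, ht0⟩ := hEven
  have ht : nM / Δ = 2 * t := by omega
  have hΔ0 : 0 < Δ := hΔ
  have hQ : nM % Δ < Δ := Nat.mod_lt _ hΔ0
  have hnM : Δ * (2 * t) + nM % Δ = nM := by
    have := Nat.div_add_mod nM Δ; rw [ht] at this; exact this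
  have hbr : Δ * (2 * t) = 2 * (t * Δ) := by ring
  have hval : nM / Δ * Δ / 2 = t * Δ := by
    rw [ht, show 2 * t * Δ = t * Δ * 2 from by ring]
    exact Nat.mul_div_cancel _ (by norm_num)
  rw [hval]
  -- common construction pieces
  set S1 := (Finset.Ico Δ nM).filter (fun p => (Even (p / Δ) ↔ p % Δ < nM % Δ)) with hS1def
  have hS1card : S1.card = t * Δ := card_S1 hΔ0 ht
  have hS1mem : ∀ p ∈ S1, (Δ ≤ p ∧ p < nM) ∧ (Even (p / Δ) ↔ p % Δ < nM % Δ) := by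
    intro p hp
    rw [hS1def, Finset.mem_filter, Finset.mem_Ico] at hp
    exact hp
  refine ⟨fun h1 => ?_, fun h1 h2 => ?_, fun h1 => ?_⟩
  · -- region 1 : x ≤ t*Δ
    obtain ⟨B, hBS, hBcard⟩ := Finset.exists_subset_card_eq
      (show x ≤ S1.card by rw [hS1card]; exact h1)
    have hBsub : B ⊆ Finset.range nM :=
      fun p hp => Finset.mem_range.mpr (hS1mem p (hBS hp)).1.2
    have hfilter : B.filter (fun p => Δ ≤ p) = B :=
      Finset.filter_true_of_mem (fun p hp => (hS1mem p (hBS hp)).1.1)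
    have hov := ov_slots hΔ0 hBsub (fun p hp => (hS1mem p (hBS hp)).2)
    rw [hfilter, hBcard] at hov
    refine rho_eq ?_ ⟨vecOf B, ?_, ?_⟩
    · intro a ha
      have h := LB1 (Δ := Δ) (onesOf_subset a)
      rw [← overlap_eq a] at h
      rw [wt_eq] at ha
      omega
    · rw [wt_eq, onesOf_vecOf hBsub, hBcard]
    · rw [overlap_eq, onesOf_vecOf hBsub]
      omega
  · -- region 2 : t*Δ ≤ x ≤ t*Δ + Q
    obtain ⟨B2, hB2sub, hB2card⟩ := Finset.exists_subset_card_eq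
      (show x - t * Δ ≤ (Finset.range (nM % Δ)).card by rw [Finset.card_range]; omega)
    have hB2lt : ∀ p ∈ B2, p < nM % Δ :=
      fun p hp => Finset.mem_range.mp (hB2sub hp)
    have hdisj : Disjoint S1 B2 := by
      rw [Finset.disjoint_left]
      intro p hp1 hp2
      have := (hS1mem p hp1).1.1
      have := hB2lt p hp2
      omega
    have hAcard : (S1 ∪ B2).card = x := by
      rw [Finset.card_union_of_disjoint hdisj, hS1card, hB2card]
      omega
    have hAsub : S1 ∪ B2 ⊆ Finset.range nM := by
      intro p hp
      rcases Finset.mem_union.mp hp with h | h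
      · exact Finset.mem_range.mpr (hS1mem p h).1.2
      · exact Finset.mem_range.mpr (by have := hB2lt p h; omega)
    have hslot : ∀ p ∈ S1 ∪ B2, (Even (p / Δ) ↔ p % Δ < nM % Δ) := by
      intro p hp
      rcases Finset.mem_union.mp hp with h | h
      · exact (hS1mem p h).2
      · have hplt := hB2lt p h
        rw [Nat.div_eq_of_lt (by omega), Nat.mod_eq_of_lt (by omega)]
        simp only [Even.zero, true_iff]
        exact hplt
    have hfilter : (S1 ∪ B2).filter (fun p => Δ ≤ p) = S1 := by
      ext p
      rw [Finset.mem_filter, Finset.mem_union]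
      constructor
      · rintro ⟨h | h, hge⟩
        · exact h
        · exact absurd hge (by have := hB2lt p h; omega)
      · intro h
        exact ⟨Or.inl h, (hS1mem p h).1.1⟩
    have hov := ov_slots hΔ0 hAsub hslot
    rw [hfilter, hAcard, hS1card] at hov
    refine rho_eq ?_ ⟨vecOf (S1 ∪ B2), ?_, ?_⟩
    · intro a ha
      have h := LB2 hΔ0 ht (onesOf_subset a)
      rw [← overlap_eq a] at h
      rw [wt_eq] at ha
      omega
    · rw [wt_eq, onesOf_vecOf hAsub, hAcard]
    · rw [overlap_eq, onesOf_vecOf hAsub]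
      omega
  · -- region 3 : t*Δ + Q ≤ x
    have hdisj : Disjoint S1 (Finset.range (nM % Δ)) := by
      rw [Finset.disjoint_left]
      intro p hp1 hp2
      have := (hS1mem p hp1).1.1
      have := Finset.mem_range.mp hp2
      omega
    have hA0card : (S1 ∪ Finset.range (nM % Δ)).card = t * Δ + nM % Δ := by
      rw [Finset.card_union_of_disjoint hdisj, hS1card, Finset.card_range]
    have hA0sub : S1 ∪ Finset.range (nM % Δ) ⊆ Finset.range nM := by
      intro p hp
      rcases Finset.mem_union.mp hp with h | h
      · exact Finset.mem_range.mpr (hS1mem p h).1.2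
      · exact Finset.mem_range.mpr (by have := Finset.mem_range.mp h; omega)
    have hslot : ∀ p ∈ S1 ∪ Finset.range (nM % Δ), (Even (p / Δ) ↔ p % Δ < nM % Δ) := by
      intro p hp
      rcases Finset.mem_union.mp hp with h | h
      · exact (hS1mem p h).2
      · have hplt := Finset.mem_range.mp h
        rw [Nat.div_eq_of_lt (by omega), Nat.mod_eq_of_lt (by omega)]
        simp only [Even.zero, true_iff]
        exact hplt
    have hfilter : (S1 ∪ Finset.range (nM % Δ)).filter (fun p => Δ ≤ p) = S1 := by
      ext p
      rw [Finset.mem_filter, Finset.mem_union]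
      constructor
      · rintro ⟨h | h, hge⟩
        · exact h
        · exact absurd hge (by have := Finset.mem_range.mp h; omega)
      · intro h
        exact ⟨Or.inl h, (hS1mem p h).1.1⟩
    have hov := ov_slots hΔ0 hA0sub hslot
    rw [hfilter, hA0card, hS1card] at hov
    have hov0 : ovN Δ nM (S1 ∪ Finset.range (nM % Δ)) = 0 := by omega
    obtain ⟨A, hA0A, hAsub, hAcard⟩ := Finset.exists_subsuperset_card_eq (n := x) hA0sub
      (by rw [hA0card]; exact h1) (by rw [Finset.card_range]; exact hx)
    have hovA : ovN Δ nM A = 0 :=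
      Nat.le_zero.mp (hov0 ▸ ovN_mono hA0A)
    refine rho_eq ?_ ⟨vecOf A, ?_, ?_⟩
    · intro a _
      exact Nat.zero_le _
    · rw [wt_eq, onesOf_vecOf hAsub, hAcard]
    · rw [overlap_eq, onesOf_vecOf hAsub]
      exact hovA
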